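/- Let Γ be a countable discrete group with a central element z of infinite order, let Z = ⟨z⟩ be the cyclic subgroup it generates, and let LZ be the abelian von Neumann subalgebra of B(ℓ²(Γ)) generated by the unitary λ(z). If p is any nonzero orthogonal projection in LZ and a ∈ ℂΓ satisfies λ(a)·p = 0, then a = 0. (That is, the restriction of the left regular representation to the invariant subspace p·ℓ²(Γ) is faithful on ℂΓ.) -/

import Mathlib

set_option maxHeartbeats 1000000
set_option synthInstance.maxHeartbeats 400000
noncomputable section

open scoped ENNReal

/-- ℓ²(Γ), the Hilbert space of square-summable complex functions on `G`. -/
abbrev l2 (G : Type*) := lp (fun _ : G => ℂ) 2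

namespace GroupCstar

lemma two_toReal_pos : 0 < (2 : ℝ≥0∞).toReal := by norm_num

/-- The linear isometry of ℓ² spaces induced by a bijection of index sets,
`f ↦ f ∘ e.symm`. -/
def lpShift {α β : Type*} (e : α ≃ β) : l2 α ≃ₗᵢ[ℂ] l2 β where
  toFun f := ⟨fun b => f (e.symm b), by
    show Memℓp _ 2
    rw [memℓp_gen_iff two_toReal_pos]
    exact e.symm.summable_iff.2 ((lp.memℓp f).summable two_toReal_pos)⟩
  invFun f := ⟨fun a => f (e a), by
    show Memℓp _ 2
    rw [memℓp_gen_iff two_toReal_pos]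
    exact e.summable_iff.2 ((lp.memℓp f).summable two_toReal_pos)⟩
  map_add' f g := rfl
  map_smul' c f := rfl
  left_inv f := by ext a; simp
  right_inv f := by ext b; simp
  norm_map' f := by
    rw [lp.norm_eq_tsum_rpow two_toReal_pos, lp.norm_eq_tsum_rpow two_toReal_pos]
    congr 1
    exact Equiv.tsum_eq e.symm fun b => ‖f b‖ ^ (2 : ℝ≥0∞).toReal

@[simp] lemma lpShift_apply {α β : Type*} (e : α ≃ β) (f : l2 α) (b : β) :
    (lpShift e f : ∀ _ : β, ℂ) b = f (e.symm b) := rfl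

variable (G : Type*) [Group G]

/-- The algebra `B(ℓ²(G))` of bounded operators on `ℓ²(G)`. -/
abbrev B := l2 G →L[ℂ] l2 G

variable {G}

/-- The left regular representation of a group element, as a bounded (unitary) operator on
ℓ²(G): `(leftReg g f) x = f (g⁻¹ * x)`. -/
def leftReg (g : G) : B G :=
  (lpShift (Equiv.mulLeft g)).toLinearIsometry.toContinuousLinearMap

@[simp] lemma leftReg_apply (g : G) (f : l2 G) (x : G) :
    (leftReg g f : ∀ _ : G, ℂ) x = f (g⁻¹ * x) := rfl

variable (G)

/-- The left regular representation as a monoid homomorphism into bounded operators. -/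
def leftRegMonoidHom : G →* B G where
  toFun := leftReg
  map_one' := by ext f x; simp
  map_mul' g h := by ext f x; simp [mul_assoc]

/-- The left regular representation `λ` of the complex group algebra `ℂ[G]` on `ℓ²(G)`,
extending `g ↦ leftReg g` linearly. -/
def lam : MonoidAlgebra ℂ G →ₐ[ℂ] B G :=
  (MonoidAlgebra.lift ℂ (B G) G) (leftRegMonoidHom G)

/-- δ_e, the canonical trace vector in ℓ²(G). -/
def deltaOne : l2 G :=
  letI := Classical.decEq G
  lp.single 2 (1 : G) (1 : ℂ)

variable {G}

/-- The canonical trace `τ(x) = ⟨x δ_e, δ_e⟩` on `B(ℓ²(G))` (in particular on the group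
von Neumann algebra).  Note: with the mathematician's convention (linear in the first
variable) `⟨x δ_e, δ_e⟩` is `inner δ_e (x δ_e)` in Mathlib's convention. -/
def tau (x : B G) : ℂ := inner (𝕜 := ℂ) (deltaOne G) (x (deltaOne G))

/-- The commutant of a set of bounded operators. -/
def commutant (S : Set (B G)) : Set (B G) := {x | ∀ s ∈ S, s * x = x * s}

variable (G)

/-- The group von Neumann algebra `LG`, realized as the double commutant of `λ(ℂ[G])`
inside `B(ℓ²(G))`. -/
def vN : Set (B G) := commutant (commutant (Set.range (lam G)))

/-- The center `Z(LG)` of the group von Neumann algebra. -/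
def vNCenter : Set (B G) := {x | x ∈ vN G ∧ ∀ y ∈ vN G, x * y = y * x}

variable {G}

/-- An orthogonal projection: a self-adjoint idempotent. -/
def IsProjection (p : B G) : Prop := IsSelfAdjoint p ∧ p * p = p

variable (G)

/-- The central granularity `σ(G)`: the infimum of the traces of the nonzero orthogonal
projections in the center of the group von Neumann algebra. -/
def centralGranularity : ℝ :=
  sInf ((fun p => (tau p).re) '' {p : B G | p ∈ vNCenter G ∧ IsProjection p ∧ p ≠ 0})

/-- The set of orders of finite subgroups of `G`. -/
def finSubgroupOrders : Set ℕ := {n | ∃ H : Subgroup G, Finite H ∧ Nat.card H = n}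

open scoped Classical in
/-- The torsion multiplier `θ(G) = 1 / lcm {|H| : H ≤ G finite}`, with the convention
that the lcm of an unbounded set is `∞` and `1/∞ = 0`. -/
def torsionMultiplier : ℝ :=
  if h : (finSubgroupOrders G).Finite then ((h.toFinset.lcm id : ℕ) : ℝ)⁻¹ else 0

/-- The additive subgroup of `ℝ` generated by the reciprocals of the orders of the finite
subgroups of `G`. -/
def atiyahGroup : AddSubgroup ℝ :=
  AddSubgroup.closure {x : ℝ | ∃ H : Subgroup G, Finite H ∧ x = ((Nat.card H : ℝ))⁻¹}

/-- The operator `L_A` on `ℓ²(G)ⁿ` associated to a matrix `A ∈ Mₙ(ℂ[G])`, given by applying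
`λ` entrywise and letting the resulting matrix of operators act. -/
def LA {n : ℕ} (A : Matrix (Fin n) (Fin n) (MonoidAlgebra ℂ G)) :
    PiLp 2 (fun _ : Fin n => l2 G) →L[ℂ] PiLp 2 (fun _ : Fin n => l2 G) :=
  letI e := PiLp.continuousLinearEquiv 2 ℂ (fun _ : Fin n => l2 G)
  ((e.symm : (∀ _ : Fin n, l2 G) →L[ℂ] PiLp 2 (fun _ : Fin n => l2 G)).comp
      (ContinuousLinearMap.pi fun i =>
        ∑ j, (lam G (A i j)).comp (ContinuousLinearMap.proj j))).comp
    (e : PiLp 2 (fun _ : Fin n => l2 G) →L[ℂ] (∀ _ : Fin n, l2 G))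

/-- The vector `δ_e eᵢ` in `ℓ²(G)ⁿ`. -/
def stdv {n : ℕ} (i : Fin n) : PiLp 2 (fun _ : Fin n => l2 G) :=
  (WithLp.equiv 2 (∀ _ : Fin n, l2 G)).symm (Pi.single i (deltaOne G))

/-- The von Neumann dimension `dim_{LG} ker L_A = Σᵢ ⟨P (δ_e eᵢ), δ_e eᵢ⟩`, where `P` is the
orthogonal projection onto the kernel of `L_A`. -/
def kerDim {n : ℕ} (A : Matrix (Fin n) (Fin n) (MonoidAlgebra ℂ G)) : ℝ :=
  haveI : CompleteSpace (PiLp 2 (fun _ : Fin n => l2 G)) := inferInstance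
  haveI : Submodule.HasOrthogonalProjection
      (LinearMap.ker (LA G A : PiLp 2 (fun _ : Fin n => l2 G) →ₗ[ℂ] PiLp 2 (fun _ : Fin n => l2 G))) :=
    Submodule.HasOrthogonalProjection.ofCompleteSpace _
  ∑ i, (inner (𝕜 := ℂ)
    ((Submodule.orthogonalProjectionOnto (LinearMap.ker (LA G A : PiLp 2 (fun _ : Fin n => l2 G) →ₗ[ℂ] PiLp 2 (fun _ : Fin n => l2 G))) (stdv G i) :
        PiLp 2 (fun _ : Fin n => l2 G)))
    (stdv G i)).re

/-- `G` satisfies the strong Atiyah conjecture: all von Neumann kernel dimensions of matrices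
over `ℂ[G]` lie in the additive subgroup generated by the reciprocals of the orders of finite
subgroups. -/
def SatisfiesStrongAtiyah : Prop :=
  ∀ n : ℕ, 1 ≤ n → ∀ A : Matrix (Fin n) (Fin n) (MonoidAlgebra ℂ G), kerDim G A ∈ atiyahGroup G

variable {G}

/-- The canonical involution on the complex group algebra: `star (Σ cg·g) = Σ conj(cg)·g⁻¹`. -/
def gaStar (a : MonoidAlgebra ℂ G) : MonoidAlgebra ℂ G :=
  MonoidAlgebra.ofCoeff
    (Finsupp.mapDomain (fun g : G => g⁻¹) (Finsupp.mapRange (starRingEnd ℂ) (map_zero _) a.coeff))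

/-- `N` is a C*-norm on the group algebra `ℂ[G]`: a genuine algebra norm satisfying the
C*-identity `N(a* a) = N(a)²`. -/
def IsCstarNorm (N : MonoidAlgebra ℂ G → ℝ) : Prop :=
  (∀ a, 0 ≤ N a) ∧
  (∀ a, N a = 0 ↔ a = 0) ∧
  (∀ a b, N (a + b) ≤ N a + N b) ∧
  (∀ (c : ℂ) (a), N (c • a) = ‖c‖ * N a) ∧
  (∀ a b, N (a * b) ≤ N a * N b) ∧
  (∀ a, N (gaStar a * a) = N a ^ 2)

variable (G)

/-- `ℂ[G]` is C*_r-unique: no C*-norm on `ℂ[G]` is properly majorized by the reduced norm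
`a ↦ ‖λ(a)‖`. -/
def IsCstarRedUnique : Prop :=
  ¬ ∃ N : MonoidAlgebra ℂ G → ℝ, IsCstarNorm N ∧
      (∀ a, N a ≤ ‖lam G a‖) ∧ (∃ a, N a < ‖lam G a‖)

variable {G}

/-- The conjugacy class of an element. -/
def conjClass (g : G) : Set G := {x | IsConj g x}

variable (G)

/-- The FC-centre: the set of elements with finite conjugacy class. -/
def fcCentre : Set G := {g : G | (conjClass g).Finite}

end GroupCstar

open MeasureTheory Filter

noncomputable section

instance fact01 : Fact ((0:ℝ) < 1) := ⟨one_pos⟩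

instance addCircle_punctured_neBot :
    (nhdsWithin (0 : AddCircle (1:ℝ)) {(0:AddCircle (1:ℝ))}ᶜ).NeBot := by
  rw [← mem_closure_iff_nhdsWithin_neBot]
  have h0 : Filter.Tendsto (fun n : ℕ => (1/(n+2) : ℝ)) Filter.atTop (nhds 0) := by
    have := Filter.Tendsto.comp (tendsto_one_div_atTop_nhds_zero_nat (𝕜 := ℝ))
      (Filter.tendsto_add_atTop_nat 2)
    simp only [Function.comp_def] at this
    refine this.congr fun n => ?_
    simp [Function.comp, add_comm]
  have h : Filter.Tendsto (fun n : ℕ => ((1/(n+2) : ℝ) : AddCircle (1:ℝ)))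
      Filter.atTop (nhds 0) := by
    have := ((AddCircle.continuous_mk' (1:ℝ)).tendsto 0).comp h0
    simpa [Function.comp_def] using this
  refine mem_closure_of_tendsto h (Filter.Eventually.of_forall fun n => ?_)
  simp only [Set.mem_compl_iff, Set.mem_singleton_iff]
  rw [AddCircle.coe_eq_zero_iff]
  rintro ⟨k, hk⟩
  have hk' : (k:ℝ) = 1/(n+2) := by
    rw [zsmul_eq_mul, mul_one] at hk; exact hk
  have h1 : (0:ℝ) < 1/(n+2) := by positivity
  have h2 : (1/(n+2:ℝ)) < 1 := by
    rw [div_lt_one (by positivity)]; linarith [Nat.cast_nonneg (α := ℝ) n]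
  have hk1 : 0 < k := by exact_mod_cast hk' ▸ h1
  have hk2 : k < 1 := by exact_mod_cast hk' ▸ h2
  omega

/-- `fourier j x` is the `j`-th power of `fourier 1 x`. -/
lemma fourier_eq_zpow (j : ℤ) (x : AddCircle (1:ℝ)) :
    (fourier j x : ℂ) = (fourier 1 x : ℂ) ^ j := by
  have hne : (fourier 1 x : ℂ) ≠ 0 := Circle.coe_ne_zero _
  induction j using Int.induction_on with
  | zero => simp [fourier_zero]
  | succ n ih =>
      rw [fourier_add, ih, zpow_add_one₀ hne]
  | pred n ih =>
      have h : (-(n:ℤ) - 1) = (-(n:ℤ)-1) := rfl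
      have := fourier_add (T := (1:ℝ)) (m := -(n:ℤ)-1) (n := 1) (x := x)
      simp only [sub_add_cancel] at this
      have h2 : (fourier (-(n:ℤ)-1) x : ℂ) = fourier (-(n:ℤ)) x / fourier 1 x := by
        field_simp [this]
        exact this.symm
      rw [h2, ih, zpow_sub_one₀ hne, div_eq_mul_inv]

end

noncomputable section
open MeasureTheory

lemma fourier_one_inj : Function.Injective (fun x : AddCircle (1:ℝ) => (fourier 1 x : ℂ)) := by
  intro x y h
  apply AddCircle.injective_toCircle (one_ne_zero)
  apply Subtype.coe_injective
  simpa [fourier_apply, one_zsmul] using h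

lemma trigPoly_zero_finite (T' : Finset ℤ) (c : ℤ → ℂ) (j₀ : ℤ) (hj₀ : j₀ ∈ T')
    (hc : c j₀ ≠ 0) :
    {x : AddCircle (1:ℝ) | ∑ j ∈ T', c j * fourier j x = 0}.Finite := by
  have hne : T'.Nonempty := ⟨j₀, hj₀⟩
  set m := T'.min' hne with hm
  set P : Polynomial ℂ := ∑ j ∈ T', Polynomial.C (c j) * Polynomial.X ^ (j - m).toNat with hP
  have hPne : P ≠ 0 := by
    intro h0
    have hcoeff : P.coeff ((j₀ - m).toNat) = c j₀ := by
      rw [hP, Polynomial.finset_sum_coeff]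
      rw [Finset.sum_eq_single j₀]
      · simp
      · intro j hj hjne
        simp only [Polynomial.coeff_C_mul, Polynomial.coeff_X_pow]
        have h1 : (0:ℤ) ≤ j - m := sub_nonneg.2 (T'.min'_le j hj)
        have h2 : (0:ℤ) ≤ j₀ - m := sub_nonneg.2 (T'.min'_le j₀ hj₀)
        have : (j - m).toNat ≠ (j₀ - m).toNat := by omega
        simp [this.symm]
      · intro h; exact absurd hj₀ h
    rw [h0] at hcoeff; simp at hcoeff; exact hc hcoeff.symm
  have hsub : {x : AddCircle (1:ℝ) | ∑ j ∈ T', c j * fourier j x = 0} ⊆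
      (fun x : AddCircle (1:ℝ) => (fourier 1 x : ℂ)) ⁻¹' {z | P.IsRoot z} := by
    intro x hx
    simp only [Set.mem_setOf_eq] at hx ⊢
    set u : ℂ := fourier 1 x with hu
    have hune : u ≠ 0 := Circle.coe_ne_zero _
    show P.IsRoot u
    have heval : P.eval u = (∑ j ∈ T', c j * u ^ j) * (u ^ m)⁻¹ := by
      rw [hP, Polynomial.eval_finset_sum, Finset.sum_mul]
      refine Finset.sum_congr rfl fun j hj => ?_
      have h1 : (0:ℤ) ≤ j - m := sub_nonneg.2 (T'.min'_le j hj)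
      rw [Polynomial.eval_mul, Polynomial.eval_C, Polynomial.eval_pow, Polynomial.eval_X]
      rw [mul_assoc]
      congr 1
      rw [← zpow_natCast u ((j - m).toNat), Int.toNat_of_nonneg h1, zpow_sub₀ hune]
      field_simp
    have hsum : ∑ j ∈ T', c j * u ^ j = 0 := by
      rw [← hx]
      refine Finset.sum_congr rfl fun j hj => ?_
      rw [fourier_eq_zpow]
    rw [Polynomial.IsRoot, heval, hsum, zero_mul]
  exact Set.Finite.subset (Set.Finite.preimage (fourier_one_inj.injOn)
    (Polynomial.finite_setOf_isRoot hPne)) hsub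

end

noncomputable section
open MeasureTheory

lemma fourierCoeff_congr_ae' {f g : AddCircle (1:ℝ) → ℂ}
    (h : f =ᵐ[AddCircle.haarAddCircle] g) (n : ℤ) : fourierCoeff f n = fourierCoeff g n := by
  unfold fourierCoeff
  exact integral_congr_ae (h.mono fun t ht => by dsimp only; rw [ht])

lemma conv_eta_zero (T' : Finset ℤ) (c : ℤ → ℂ) (η : lp (fun _ : ℤ => ℂ) 2)
    (hconv : ∀ m : ℤ, ∑ j ∈ T', c j * η (m - j) = 0)
    (j₀ : ℤ) (hj₀ : j₀ ∈ T') (hc : c j₀ ≠ 0) : η = 0 := by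
  set μ := AddCircle.haarAddCircle (T := (1:ℝ)) with hμ
  set F : Lp ℂ 2 μ := (fourierBasis (T := 1)).repr.symm η with hF
  have hrepr : ∀ n : ℤ, fourierCoeff (F : AddCircle (1:ℝ) → ℂ) n = η n := by
    intro n
    rw [← fourierBasis_repr]
    rw [hF, LinearIsometryEquiv.apply_symm_apply]
  set φ : AddCircle (1:ℝ) → ℂ := fun x => ∑ j ∈ T', c j * fourier j x with hφ
  have hφcont : Continuous φ := by
    apply continuous_finset_sum
    intro j _
    exact continuous_const.mul (fourier j).continuous
  have hφbdd : ∀ x, ‖φ x‖ ≤ ∑ j ∈ T', ‖c j‖ := by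
    intro x
    refine (norm_sum_le _ _).trans (Finset.sum_le_sum fun j _ => ?_)
    rw [norm_mul]
    have : ‖(fourier j x : ℂ)‖ = 1 := by
      exact Circle.norm_coe _
    rw [this, mul_one]
  have hFmem : MemLp (F : AddCircle (1:ℝ) → ℂ) 2 μ := Lp.memLp F
  have hFint : Integrable (F : AddCircle (1:ℝ) → ℂ) μ := hFmem.integrable one_le_two
  set G : AddCircle (1:ℝ) → ℂ := fun x => φ x * F x with hG
  have hGmeas : AEStronglyMeasurable G μ :=
    hφcont.aestronglyMeasurable.mul (Lp.aestronglyMeasurable F)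
  have hGmem : MemLp G 2 μ := by
    refine MemLp.of_le_mul (c := ∑ j ∈ T', ‖c j‖) hFmem hGmeas
      (Filter.Eventually.of_forall fun x => ?_)
    rw [hG]
    simp only [norm_mul]
    exact mul_le_mul_of_nonneg_right (hφbdd x) (norm_nonneg _)
  -- each shifted term is integrable
  have hterm_int : ∀ k : ℤ, Integrable (fun t => (fourier k t : ℂ) * F t) μ := by
    intro k
    exact hFint.bdd_mul ((fourier k).continuous.aestronglyMeasurable)
      (Filter.Eventually.of_forall fun x => le_of_eq (Circle.norm_coe _))
  have hGcoeff : ∀ n : ℤ, fourierCoeff G n =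
      ∑ j ∈ T', c j * fourierCoeff (F : AddCircle (1:ℝ) → ℂ) (n - j) := by
    intro n
    unfold fourierCoeff
    have hintg : ∀ t : AddCircle (1:ℝ), (fourier (-n) t : ℂ) • G t =
        ∑ j ∈ T', c j • ((fourier (-(n - j)) t : ℂ) * F t) := by
      intro t
      simp only [hG, hφ, smul_eq_mul, Finset.sum_mul, Finset.mul_sum]
      refine Finset.sum_congr rfl fun j hj => ?_
      have h2 : (fourier (-(n - j)) t : ℂ) = fourier (-n) t * fourier j t := by
        rw [← fourier_add]
        congr 1
        ring
      rw [h2]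
      ring
    calc ∫ t, (fourier (-n) t : ℂ) • G t ∂μ
        = ∫ t, ∑ j ∈ T', c j • ((fourier (-(n - j)) t : ℂ) * F t) ∂μ := by
          exact integral_congr_ae (Filter.Eventually.of_forall hintg)
      _ = ∑ j ∈ T', ∫ t, c j • ((fourier (-(n - j)) t : ℂ) * F t) ∂μ := by
          exact integral_finset_sum _ fun j _ => (hterm_int (-(n - j))).smul (c j)
      _ = ∑ j ∈ T', c j * fourierCoeff (F : AddCircle (1:ℝ) → ℂ) (n - j) := by
          refine Finset.sum_congr rfl fun j hj => ?_
          rw [integral_smul]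
          rw [smul_eq_mul]
          congr 1
  have hG0 : ∀ n : ℤ, fourierCoeff G n = 0 := by
    intro n
    rw [hGcoeff n]
    have := hconv n
    rw [← this]
    exact Finset.sum_congr rfl fun j _ => by rw [hrepr]
  -- conclude G = 0 a.e.
  have htoLp : hGmem.toLp G = 0 := by
    apply (fourierBasis (T := 1)).repr.injective
    rw [map_zero]
    apply lp.ext
    funext n
    rw [fourierBasis_repr]
    have : fourierCoeff ((hGmem.toLp G : Lp ℂ 2 μ) : AddCircle (1:ℝ) → ℂ) n
        = fourierCoeff G n := fourierCoeff_congr_ae' (hGmem.coeFn_toLp) n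
    rw [this, hG0]
    rfl
  have hGae : G =ᵐ[μ] 0 := by
    have h1 := hGmem.coeFn_toLp
    rw [htoLp] at h1
    exact h1.symm.trans (Lp.coeFn_zero ℂ 2 μ)
  have hφne : ∀ᵐ x ∂μ, φ x ≠ 0 := by
    have hfin := trigPoly_zero_finite T' c j₀ hj₀ hc
    have := hfin.countable.ae_notMem μ
    exact this.mono fun x hx => hx
  have hFae : (F : AddCircle (1:ℝ) → ℂ) =ᵐ[μ] 0 := by
    refine (hGae.and hφne).mono fun x ⟨h1, h2⟩ => ?_
    have : φ x * F x = 0 := h1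
    rcases mul_eq_zero.1 this with h | h
    · exact absurd h h2
    · exact h
  have hη0 : ∀ n : ℤ, η n = 0 := by
    intro n
    rw [← hrepr n, fourierCoeff_congr_ae' hFae n]
    unfold fourierCoeff
    simp
  apply lp.ext
  funext n
  exact hη0 n

end

open GroupCstar

section GroupAux
variable {Γ : Type*} [Group Γ]

/-- Evaluation at a point as a continuous linear functional on `ℓ²(Γ)`. -/
def evalCLM (x : Γ) : l2 Γ →L[ℂ] ℂ :=
  LinearMap.mkContinuous
    { toFun := fun f => f x
      map_add' := fun f g => congr_fun (lp.coeFn_add f g) x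
      map_smul' := fun c f => congr_fun (lp.coeFn_smul c f) x }
    1 (fun f => by
      simpa using lp.norm_apply_le_norm (by norm_num : (2:ℝ≥0∞) ≠ 0) f x)

@[simp] lemma evalCLM_apply (x : Γ) (f : l2 Γ) : evalCLM x f = f x := rfl

variable (z : Γ)

/-- Functions supported on the cyclic subgroup generated by `z`. -/
def Ksub : Submodule ℂ (l2 Γ) where
  carrier := {f : l2 Γ | ∀ x : Γ, x ∉ Subgroup.zpowers z → (f : Γ → ℂ) x = 0}
  add_mem' := fun {f g} hf hg x hx => by
    rw [congr_fun (lp.coeFn_add f g) x, Pi.add_apply, hf x hx, hg x hx, add_zero]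
  zero_mem' := fun x hx => by simp
  smul_mem' := fun c f hf x hx => by
    rw [congr_fun (lp.coeFn_smul c f) x, Pi.smul_apply, hf x hx, smul_zero]

lemma mem_Ksub_iff {f : l2 Γ} :
    f ∈ Ksub z ↔ ∀ x : Γ, x ∉ Subgroup.zpowers z → (f : Γ → ℂ) x = 0 := Iff.rfl

lemma Ksub_isClosed : IsClosed ((Ksub z : Submodule ℂ (l2 Γ)) : Set (l2 Γ)) := by
  have h : ((Ksub z : Submodule ℂ (l2 Γ)) : Set (l2 Γ)) =
      ⋂ (x : Γ) (_ : x ∉ Subgroup.zpowers z), (evalCLM x) ⁻¹' {0} := by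
    ext f
    simp only [SetLike.mem_coe, mem_Ksub_iff, Set.mem_iInter, Set.mem_preimage,
      Set.mem_singleton_iff, evalCLM_apply]
  rw [h]
  exact isClosed_iInter fun x => isClosed_iInter fun _ =>
    (isClosed_singleton).preimage (evalCLM x).continuous

lemma inner_leftReg (g : Γ) (f h : l2 Γ) :
    inner (𝕜 := ℂ) (leftReg g f) (leftReg g h) = inner (𝕜 := ℂ) f h :=
  (lpShift (Equiv.mulLeft g)).inner_map_map f h

lemma leftReg_leftReg_inv (g : Γ) (f : l2 Γ) : leftReg g⁻¹ (leftReg g f) = f := by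
  apply lp.ext
  funext x
  simp [leftReg_apply, inv_mul_cancel_left]

lemma leftReg_mem_Ksub {w : Γ} (hw : w ∈ Subgroup.zpowers z) {f : l2 Γ}
    (hf : f ∈ Ksub z) : leftReg w f ∈ Ksub z := by
  intro x hx
  rw [leftReg_apply]
  apply hf
  intro hmem
  have := (Subgroup.zpowers z).mul_mem hw hmem
  rw [mul_inv_cancel_left] at this
  exact hx this

/-- The right regular representation. -/
def rightReg (g : Γ) : B Γ :=
  (lpShift (Equiv.mulRight g)).toLinearIsometry.toContinuousLinearMap

@[simp] lemma rightReg_apply (g : Γ) (f : l2 Γ) (x : Γ) :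
    (rightReg g f : Γ → ℂ) x = f (x * g⁻¹) := rfl

lemma leftReg_comm_rightReg (w g : Γ) :
    leftReg w * rightReg g = rightReg g * leftReg w := by
  refine ContinuousLinearMap.ext fun f => ?_
  apply lp.ext
  funext x
  simp only [ContinuousLinearMap.mul_apply, leftReg_apply, rightReg_apply, mul_assoc]

lemma l2_apply_sum {ι : Type*} (s : Finset ι) (F : ι → l2 Γ) (x : Γ) :
    ((∑ i ∈ s, F i : l2 Γ) : Γ → ℂ) x = ∑ i ∈ s, (F i : Γ → ℂ) x := by
  classical
  induction s using Finset.induction with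
  | empty => simp
  | insert _ _ h ih =>
      rw [Finset.sum_insert h, congr_fun (lp.coeFn_add _ _) x, Pi.add_apply, ih,
        Finset.sum_insert h]

end GroupAux

/-- If `z` is a central element of infinite order in a countable group `Γ`
and `p` is a nonzero projection in the von Neumann algebra `LZ` generated by `λ(z)`, then
`a ↦ λ(a) p` is injective on the group ring: `λ(a) p = 0` for `a ∈ ℂ[Γ]` forces `a = 0`. -/
theorem lam_faithful_on_central_cutdown
    (Γ : Type*) [Group Γ] [Countable Γ] (z : Γ) (hz : z ∈ Subgroup.center Γ)
    (hord : ¬ IsOfFinOrder z)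
    (p : B Γ)
    (hp : p ∈ commutant (commutant ((fun w : Γ => leftReg w) '' (Subgroup.zpowers z))))
    (hproj : IsProjection p) (hpne : p ≠ 0)
    (a : MonoidAlgebra ℂ Γ) (ha : lam Γ a * p = 0) :
    a = 0 := by
  classical
  -- the orthogonal projection onto functions supported on ⟨z⟩
  haveI : CompleteSpace (Ksub z) := (Ksub_isClosed z).completeSpace_coe
  haveI : (Ksub z).HasOrthogonalProjection := Submodule.HasOrthogonalProjection.ofCompleteSpace _
  set Q : B Γ := (Ksub z).subtypeL.comp ((Ksub z).orthogonalProjectionOnto) with hQdef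
  have hQapply : ∀ v : l2 Γ, Q v = ↑((Ksub z).orthogonalProjectionOnto v) := fun v => rfl
  have hQmem : Q ∈ commutant ((fun w : Γ => leftReg w) '' (Subgroup.zpowers z)) := by
    rintro s ⟨w, hw, rfl⟩
    have hw' : w ∈ Subgroup.zpowers z := hw
    refine ContinuousLinearMap.ext fun v => ?_
    show leftReg w (Q v) = Q (leftReg w v)
    rw [hQapply, hQapply]
    symm
    rw [← Submodule.starProjection_apply]
    apply Submodule.eq_starProjection_of_mem_orthogonal
    · exact leftReg_mem_Ksub z hw' (SetLike.coe_mem _)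
    · rw [← map_sub]
      rw [Submodule.mem_orthogonal]
      intro u hu
      have h1 : u = leftReg w (leftReg w⁻¹ u) := by
        have := leftReg_leftReg_inv (w⁻¹) u
        rwa [inv_inv, eq_comm] at this
      rw [h1, inner_leftReg]
      have h2 := Submodule.sub_starProjection_mem_orthogonal (K := Ksub z) v
      rw [Submodule.starProjection_apply] at h2
      exact (Submodule.mem_orthogonal _ _).1 h2 _ (leftReg_mem_Ksub z (inv_mem hw') hu)
  -- ξ = p δ_e
  set ξ : l2 Γ := p (deltaOne Γ) with hξdef
  have hδe_mem : deltaOne Γ ∈ Ksub z := by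
    intro x hx
    have hx1 : x ≠ 1 := fun h => hx (h ▸ (Subgroup.zpowers z).one_mem)
    simp [deltaOne, lp.single_apply, hx1]
  have hQδe : Q (deltaOne Γ) = deltaOne Γ := by
    rw [hQapply]
    rw [← Submodule.starProjection_apply]
    exact Submodule.starProjection_eq_self_iff.2 hδe_mem
  have hQp : Q * p = p * Q := hp Q hQmem
  have hξK : ξ ∈ Ksub z := by
    have h3 : ξ = Q (p (deltaOne Γ)) := by
      conv_lhs => rw [hξdef, ← hQδe]
      rw [← ContinuousLinearMap.mul_apply, ← hQp, ContinuousLinearMap.mul_apply]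
    rw [h3, hQapply]
    exact SetLike.coe_mem _
  -- p commutes with the right regular representation
  have hrmem : ∀ g : Γ,
      rightReg g ∈ commutant ((fun w : Γ => leftReg w) '' (Subgroup.zpowers z)) := by
    intro g
    rintro s ⟨w, hw, rfl⟩
    exact leftReg_comm_rightReg w g
  have hrp : ∀ g : Γ, rightReg g * p = p * rightReg g := fun g => hp _ (hrmem g)
  -- ξ ≠ 0 since δ_e is separating
  have hsingle_eq : ∀ g : Γ, rightReg g (deltaOne Γ) = lp.single (E := fun _ : Γ => ℂ) 2 g (1 : ℂ) := by
    intro g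
    apply lp.ext
    funext x
    rw [rightReg_apply]
    by_cases hxg : x = g
    · subst hxg
      simp [deltaOne, lp.single_apply]
    · have h4 : x * g⁻¹ ≠ 1 := fun h => hxg (by rwa [mul_inv_eq_one] at h)
      simp [deltaOne, lp.single_apply, hxg, h4]
  have hξne : ξ ≠ 0 := by
    intro h0
    apply hpne
    refine ContinuousLinearMap.ext fun f => ?_
    rw [ContinuousLinearMap.zero_apply]
    have h1 : ∀ g : Γ, p (lp.single (E := fun _ : Γ => ℂ) 2 g (1 : ℂ)) = 0 := by
      intro g
      rw [← hsingle_eq g, ← ContinuousLinearMap.mul_apply, ← hrp g,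
        ContinuousLinearMap.mul_apply, ← hξdef, h0, map_zero]
    haveI : Fact ((1 : ℝ≥0∞) ≤ 2) := ⟨one_le_two⟩
    have h2 := lp.hasSum_single (E := fun _ : Γ => ℂ) (p := (2 : ℝ≥0∞)) (by norm_num) f
    have h3 := p.hasSum h2
    have h4 : ∀ g : Γ, p (lp.single 2 g ((f : Γ → ℂ) g)) = 0 := by
      intro g
      have h5 : lp.single (E := fun _ : Γ => ℂ) (2 : ℝ≥0∞) g ((f : Γ → ℂ) g)
          = (f : Γ → ℂ) g • lp.single (E := fun _ : Γ => ℂ) (2 : ℝ≥0∞) g (1 : ℂ) := by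
        rw [← lp.single_smul, smul_eq_mul, mul_one]
      rw [h5, _root_.map_smul, h1, smul_zero]
    have h6 : HasSum (fun _ : Γ => (0 : l2 Γ)) (p f) := by
      refine h3.congr_fun fun g => (h4 g).symm
    exact h6.unique hasSum_zero
  -- λ(a) ξ = 0
  have hlamξ : lam Γ a ξ = 0 := by
    have := congrArg (fun T : B Γ => T (deltaOne Γ)) ha
    simpa [ContinuousLinearMap.mul_apply] using this
  -- coordinates
  have hcoord : ∀ x : Γ, ∑ g ∈ a.coeff.support, a.coeff g * (ξ : Γ → ℂ) (g⁻¹ * x) = 0 := by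
    intro x
    have h5 : lam Γ a ξ = ∑ g ∈ a.coeff.support, a.coeff g • leftReg g ξ := by
      rw [lam, MonoidAlgebra.lift_apply, Finsupp.sum, ContinuousLinearMap.sum_apply]
      rfl
    have h6 : ((lam Γ a ξ : l2 Γ) : Γ → ℂ) x
        = ∑ g ∈ a.coeff.support, a.coeff g * (ξ : Γ → ℂ) (g⁻¹ * x) := by
      rw [h5, l2_apply_sum]
      refine Finset.sum_congr rfl fun g _ => ?_
      rw [congr_fun (lp.coeFn_smul (a.coeff g) (leftReg g ξ)) x, Pi.smul_apply, smul_eq_mul,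
        leftReg_apply]
    rw [hlamξ] at h6
    rw [← h6]
    simp
  -- pass to ℓ²(ℤ)
  have hz_inj : Function.Injective (fun n : ℤ => z ^ n) :=
    injective_zpow_iff_not_isOfFinOrder.2 hord
  have hmemη : Memℓp (fun n : ℤ => (ξ : Γ → ℂ) (z ^ n)) 2 := by
    rw [memℓp_gen_iff two_toReal_pos]
    exact ((lp.memℓp ξ).summable two_toReal_pos).comp_injective hz_inj
  set η : lp (fun _ : ℤ => ℂ) 2 := ⟨fun n => (ξ : Γ → ℂ) (z ^ n), hmemη⟩ with hηdef
  -- main argument: every coefficient of `a` vanishes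
  by_contra hane
  obtain ⟨g₀, hg₀⟩ : ∃ g : Γ, a.coeff g ≠ 0 := by
    by_contra hall
    push_neg at hall
    exact hane (MonoidAlgebra.ext (Finsupp.ext fun g => hall g))
  set emb : ℤ → Γ := fun j => g₀ * z ^ j with hembdef
  have hembinj : Function.Injective emb := fun i j h =>
    hz_inj (by simpa [hembdef] using h)
  set T' : Finset ℤ := a.coeff.support.preimage emb (hembinj.injOn) with hT'def
  set c : ℤ → ℂ := fun j => a.coeff (g₀ * z ^ j) with hcdef
  have hconv : ∀ m : ℤ, ∑ j ∈ T', c j * η (m - j) = 0 := by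
    intro m
    have h7 := hcoord (g₀ * z ^ m)
    have himg : T'.image emb ⊆ a.coeff.support := by
      intro g hg
      obtain ⟨j, hj, rfl⟩ := Finset.mem_image.1 hg
      exact Finset.mem_preimage.1 hj
    have h8 : ∑ g ∈ a.coeff.support, a.coeff g * (ξ : Γ → ℂ) (g⁻¹ * (g₀ * z ^ m))
        = ∑ g ∈ T'.image emb, a.coeff g * (ξ : Γ → ℂ) (g⁻¹ * (g₀ * z ^ m)) := by
      symm
      apply Finset.sum_subset himg
      intro g hg hgn
      have hsupp : (ξ : Γ → ℂ) (g⁻¹ * (g₀ * z ^ m)) = 0 := by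
        apply hξK
        intro hmem
        obtain ⟨k, hk⟩ := Subgroup.mem_zpowers_iff.1 hmem
        have hgeq : g = emb (m - k) := by
          show g = g₀ * z ^ (m - k)
          have h' : g * z ^ k = g₀ * z ^ m := by rw [hk]; group
          calc g = (g₀ * z ^ m) * (z ^ k)⁻¹ := by rw [← h']; group
            _ = g₀ * z ^ (m - k) := by group
        apply hgn
        apply Finset.mem_image.2
        refine ⟨m - k, Finset.mem_preimage.2 ?_, hgeq.symm⟩
        rw [← hgeq]
        exact hg
      rw [hsupp, mul_zero]
    have h9 : ∑ g ∈ T'.image emb, a.coeff g * (ξ : Γ → ℂ) (g⁻¹ * (g₀ * z ^ m))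
        = ∑ j ∈ T', a.coeff (emb j) * (ξ : Γ → ℂ) ((emb j)⁻¹ * (g₀ * z ^ m)) :=
      Finset.sum_image fun i _ j _ h => hembinj h
    have h10 : ∀ j ∈ T', a.coeff (emb j) * (ξ : Γ → ℂ) ((emb j)⁻¹ * (g₀ * z ^ m))
        = c j * η (m - j) := by
      intro j _
      have harg : (emb j)⁻¹ * (g₀ * z ^ m) = z ^ (m - j) := by
        show (g₀ * z ^ j)⁻¹ * (g₀ * z ^ m) = z ^ (m - j)
        group
      rw [harg]
    rw [h8, h9, Finset.sum_congr rfl h10] at h7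
    exact h7
  have h0T : (0 : ℤ) ∈ T' := by
    rw [hT'def]
    apply Finset.mem_preimage.2
    have : emb 0 = g₀ := by rw [hembdef]; simp
    rw [this]
    exact Finsupp.mem_support_iff.2 hg₀
  have hc0 : c 0 ≠ 0 := by
    rw [hcdef]
    simpa using hg₀
  have hη0 : η = 0 := conv_eta_zero T' c η hconv 0 h0T hc0
  apply hξne
  apply lp.ext
  funext x
  by_cases hx : x ∈ Subgroup.zpowers z
  · obtain ⟨k, hk⟩ := Subgroup.mem_zpowers_iff.1 hx
    have : (ξ : Γ → ℂ) (z ^ k) = 0 := by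
      have := congr_fun (congrArg (fun w : lp (fun _ : ℤ => ℂ) 2 => (w : ℤ → ℂ)) hη0) k
      simpa [hηdef] using this
    rw [← hk]
    simpa using this
  · simpa using hξK x hx
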